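/- Let P be a countable discrete pretree. Define a graph T whose vertex set is P together with the set of maximal stars of P, with an edge joining v ∈ P to a maximal star H whenever v ∈ H. Then T is connected and contains no cycle, i.e. T is a tree. -/

import Mathlib

/-- A pretree: a set `P` with a ternary betweenness relation `btw x y z`
(read: `y` is between `x` and `z`) satisfying the four pretree axioms. -/
structure Pretree (P : Type*) where
  btw : P → P → P → Prop
  ax1 : ∀ x y : P, ¬ btw x y x
  ax2 : ∀ x y z : P, btw x y z ↔ btw z y x
  ax3 : ∀ x y z : P, btw x y z → ¬ btw x z y
  ax4 : ∀ x y z w : P, btw x z y → z ≠ w → btw x z w ∨ btw y z w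

/-- Two distinct points of a pretree are adjacent if no point lies between them. -/
def Pretree.Adjacent {P : Type*} (T : Pretree P) (x y : P) : Prop :=
  x ≠ y ∧ ∀ z : P, ¬ T.btw x z y

/-- A star in a pretree: a set of pairwise adjacent points. -/
def Pretree.IsStar {P : Type*} (T : Pretree P) (H : Set P) : Prop :=
  ∀ x ∈ H, ∀ y ∈ H, x ≠ y → T.Adjacent x y

/-- A maximal star of a pretree. -/
def Pretree.IsMaxStar {P : Type*} (T : Pretree P) (H : Set P) : Prop :=
  T.IsStar H ∧ ∀ H' : Set P, T.IsStar H' → H ⊆ H' → H' = H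

/-- A pretree is discrete if between any two points there are only finitely many points. -/
def Pretree.Discrete {P : Type*} (T : Pretree P) : Prop :=
  ∀ x y : P, {z : P | T.btw x z y}.Finite

/-- The graph whose vertices are the points of the pretree together with its maximal stars,
with an edge joining a point `v` to each maximal star containing it. -/
def starGraph {P : Type*} (T : Pretree P) :
    SimpleGraph (P ⊕ {H : Set P // T.IsMaxStar H}) where
  Adj a b :=
    (∃ v H, a = Sum.inl v ∧ b = Sum.inr H ∧ v ∈ H.1) ∨
      (∃ v H, b = Sum.inl v ∧ a = Sum.inr H ∧ v ∈ H.1)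
  symm := ⟨fun a b h => Or.symm h⟩
  loopless := by
    constructor
    rintro a (⟨v, H, h₁, h₂, -⟩ | ⟨v, H, h₁, h₂, -⟩) <;>
      (rw [h₁] at h₂; exact Sum.inl_ne_inr h₂)

namespace Pretree

variable {P : Type*} (T : Pretree P)

lemma not_btw_self_right (a b : P) : ¬ T.btw a b b := fun h => T.ax3 a b b h h

lemma not_btw_self_left (a b : P) : ¬ T.btw a a b :=
  fun h => T.not_btw_self_right b a ((T.ax2 a a b).mp h)

variable {T}

lemma btw_ne12 {a b c : P} (h : T.btw a b c) : a ≠ b :=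
  fun e => T.not_btw_self_left a c (e ▸ h)

lemma btw_ne23 {a b c : P} (h : T.btw a b c) : b ≠ c :=
  fun e => T.not_btw_self_right a c (e ▸ h)

lemma btw_ne13 {a b c : P} (h : T.btw a b c) : a ≠ c :=
  fun e => T.ax1 a b (by rw [e] at h ⊢; exact h)

/-- chaining lemma: `a b c` and `b c d` collinear give `a c d`. -/
lemma btw_chain {a b c d : P} (h1 : T.btw a b c) (h2 : T.btw b c d) : T.btw a c d := by
  have hca : c ≠ a := (btw_ne13 h1).symm
  rcases T.ax4 b d c a h2 hca with h | h
  · exact absurd ((T.ax2 b c a).mp h) (T.ax3 a b c h1)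
  · exact (T.ax2 d c a).mp h

/-- monotonicity: if `z` is between `x` and `y`, anything between `x` and `z` is
between `x` and `y`. -/
lemma btw_mono {x y z w : P} (hz : T.btw x z y) (hw : T.btw x w z) : T.btw x w y := by
  have hwy : w ≠ y := by
    intro e; rw [e] at hw; exact T.ax3 x z y hz hw
  rcases T.ax4 x z w y hw hwy with h | h
  · exact h
  · -- h : T.btw z w y
    have hzw : z ≠ w := (btw_ne23 hw).symm
    rcases T.ax4 x y z w hz hzw with h' | h'
    · exact absurd h' (T.ax3 x w z hw)
    · exact absurd h' (T.ax3 y w z ((T.ax2 z w y).mp h))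

lemma Adjacent.symm' {a b : P} (h : T.Adjacent a b) : T.Adjacent b a :=
  ⟨h.1.symm, fun z hz => h.2 z ((T.ax2 b z a).mp hz)⟩

/-- If `a` is adjacent to `b`, `b` adjacent to `c`, and `b` is not between `a` and `c`,
then `a` is adjacent to `c`. -/
lemma adj_triple {a b c : P} (hab : T.Adjacent a b) (hbc : T.Adjacent b c)
    (hac : a ≠ c) (hnb : ¬ T.btw a b c) : T.Adjacent a c := by
  refine ⟨hac, fun w hw => ?_⟩
  have hwb : w ≠ b := fun e => hnb (e ▸ hw)
  rcases T.ax4 a c w b hw hwb with h | h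
  · exact hab.2 w h
  · exact hbc.symm'.2 w h

/-- Two maximal stars sharing two points are equal. -/
lemma maxstar_eq_of_two {H K : Set P} (hH : T.IsMaxStar H) (hK : T.IsMaxStar K)
    {u v : P} (hu1 : u ∈ H) (hu2 : u ∈ K) (hv1 : v ∈ H) (hv2 : v ∈ K) (huv : u ≠ v) :
    H = K := by
  have cross : ∀ a ∈ H, ∀ b ∈ K, a ≠ b → T.Adjacent a b := by
    intro a ha b hb hab
    by_cases haK : a ∈ K
    · exact hK.1 a haK b hb hab
    by_cases hbH : b ∈ H
    · exact hH.1 a ha b hbH hab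
    have hau : a ≠ u := fun e => haK (e ▸ hu2)
    have hav : a ≠ v := fun e => haK (e ▸ hv2)
    have hbu : b ≠ u := fun e => hbH (e ▸ hu1)
    have hbv : b ≠ v := fun e => hbH (e ▸ hv1)
    have hadju : T.Adjacent a u := hH.1 a ha u hu1 hau
    have hadjv : T.Adjacent a v := hH.1 a ha v hv1 hav
    have hbdju : T.Adjacent u b := hK.1 u hu2 b hb (Ne.symm hbu)
    have hbdjv : T.Adjacent v b := hK.1 v hv2 b hb (Ne.symm hbv)
    by_cases hb' : T.btw a u b
    · rcases T.ax4 a b u v hb' huv with h | h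
      · exact absurd h (hadjv.2 u)
      · exact absurd h (hbdjv.symm'.2 u)
    · exact adj_triple hadju hbdju hab hb'
  have hstar : T.IsStar (H ∪ K) := by
    rintro x (hx | hx) y (hy | hy) hxy
    · exact hH.1 x hx y hy hxy
    · exact cross x hx y hy hxy
    · exact (cross y hy x hx (Ne.symm hxy)).symm'
    · exact hK.1 x hx y hy hxy
  have h1 : H ∪ K = H := hH.2 _ hstar Set.subset_union_left
  have h2 : H ∪ K = K := hK.2 _ hstar Set.subset_union_right
  rw [← h1, h2]

/-- Every star extends to a maximal star. -/
lemma exists_maxstar (T : Pretree P) {S : Set P} (hS : T.IsStar S) :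
    ∃ H : Set P, T.IsMaxStar H ∧ S ⊆ H := by
  obtain ⟨m, hm, hmax⟩ := zorn_subset_nonempty {H : Set P | T.IsStar H}
    (fun c hc hchain _ => by
      refine ⟨⋃₀ c, ?_, fun s hs => Set.subset_sUnion_of_mem hs⟩
      rintro x ⟨s, hs, hx⟩ y ⟨t, ht, hy⟩ hxy
      rcases eq_or_ne s t with rfl | hst
      · exact (hc hs) x hx y hy hxy
      · rcases hchain hs ht hst with h | h
        · exact (hc ht) x (h hx) y hy hxy
        · exact (hc hs) x hx y (h hy) hxy) S hS
  exact ⟨m, ⟨hmax.1, fun H' hH' hsub => Set.Subset.antisymm (hmax.2 hH' hsub) hsub⟩, hm⟩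


lemma starGraph_adj {v : P} {H : {H : Set P // T.IsMaxStar H}} (hv : v ∈ H.1) :
    (starGraph T).Adj (Sum.inl v) (Sum.inr H) :=
  Or.inl ⟨v, H, rfl, rfl, hv⟩

/-- classify neighbours of an `inl` vertex -/
lemma adj_inl {x : P} {b : P ⊕ {H : Set P // T.IsMaxStar H}}
    (h : (starGraph T).Adj (Sum.inl x) b) :
    ∃ H : {H : Set P // T.IsMaxStar H}, b = Sum.inr H ∧ x ∈ H.1 := by
  rcases h with ⟨v, H, h1, h2, hv⟩ | ⟨v, H, h1, h2, hv⟩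
  · exact ⟨H, h2, by cases h1; exact hv⟩
  · exact absurd h2 (by simp)

lemma adj_inr {H : {H : Set P // T.IsMaxStar H}} {b : P ⊕ {H : Set P // T.IsMaxStar H}}
    (h : (starGraph T).Adj (Sum.inr H) b) :
    ∃ v : P, b = Sum.inl v ∧ v ∈ H.1 := by
  rcases h with ⟨v, K, h1, h2, hv⟩ | ⟨v, K, h1, h2, hv⟩
  · exact absurd h1 (by simp)
  · exact ⟨v, h1, by cases h2; exact hv⟩


lemma star_singleton (T : Pretree P) (p : P) : T.IsStar {p} := by
  intro a ha b hb hab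
  rw [Set.mem_singleton_iff] at ha hb
  exact absurd (ha.trans hb.symm) hab

lemma star_pair {x y : P} (h : T.Adjacent x y) : T.IsStar {x, y} := by
  intro a ha b hb hab
  rcases ha with rfl | ha <;> rcases hb with rfl | hb
  · exact absurd rfl hab
  · rw [Set.mem_singleton_iff] at hb; subst hb; exact h
  · rw [Set.mem_singleton_iff] at ha; subst ha; exact h.symm'
  · rw [Set.mem_singleton_iff] at ha hb; subst ha; subst hb; exact absurd rfl hab

lemma maxstar_nonempty [Nonempty P] (H : {H : Set P // T.IsMaxStar H}) :
    ∃ v, v ∈ H.1 := by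
  by_contra h
  push_neg at h
  set p := Classical.arbitrary P
  have hsub : H.1 ⊆ {p} := fun v hv => absurd hv (h v)
  have := H.2.2 {p} (T.star_singleton p) hsub
  exact h p (this ▸ Set.mem_singleton p)

lemma reach_adj {x y : P} (hxy : x ≠ y) (hadj : ∀ z, ¬ T.btw x z y) :
    (starGraph T).Reachable (Sum.inl x) (Sum.inl y) := by
  obtain ⟨H, hH, hsub⟩ := T.exists_maxstar (star_pair ⟨hxy, hadj⟩)
  have hx : x ∈ H := hsub (by simp)
  have hy : y ∈ H := hsub (by simp)
  exact ((starGraph_adj (H := ⟨H, hH⟩) hx).reachable).trans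
    ((starGraph_adj (H := ⟨H, hH⟩) hy).reachable.symm)

lemma reach_pts (hdisc : T.Discrete) (x y : P) :
    (starGraph T).Reachable (Sum.inl x) (Sum.inl y) := by
  have key : ∀ (n : ℕ) (x y : P), {z | T.btw x z y}.ncard ≤ n →
      (starGraph T).Reachable (Sum.inl x) (Sum.inl y) := by
    intro n
    induction n with
    | zero =>
      intro x y hcard
      rcases eq_or_ne x y with rfl | hxy
      · exact SimpleGraph.Reachable.refl _
      refine reach_adj hxy fun z hz => ?_
      have : 0 < {z | T.btw x z y}.ncard :=
        (Set.ncard_pos (hdisc x y)).mpr ⟨z, hz⟩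
      omega
    | succ n ih =>
      intro x y hcard
      rcases eq_or_ne x y with rfl | hxy
      · exact SimpleGraph.Reachable.refl _
      by_cases hb : ∃ z, T.btw x z y
      · obtain ⟨z, hz⟩ := hb
        have hs1 : {w | T.btw x w z} ⊂ {w | T.btw x w y} := by
          constructor
          · intro w hw; exact btw_mono hz hw
          · intro hsub
            exact T.not_btw_self_right x z (hsub hz)
        have hs2 : {w | T.btw z w y} ⊂ {w | T.btw x w y} := by
          constructor
          · intro w hw
            exact (T.ax2 y w x).mp (btw_mono ((T.ax2 x z y).mp hz) ((T.ax2 z w y).mp hw))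
          · intro hsub
            exact T.not_btw_self_left z y (hsub hz)
        have hc1 : {w | T.btw x w z}.ncard ≤ n := by
          have := Set.ncard_lt_ncard hs1 (hdisc x y); omega
        have hc2 : {w | T.btw z w y}.ncard ≤ n := by
          have := Set.ncard_lt_ncard hs2 (hdisc x y); omega
        exact (ih x z hc1).trans (ih z y hc2)
      · exact reach_adj hxy fun z hz => hb ⟨z, hz⟩
  exact key _ x y le_rfl

/-- If `b` lies in two distinct maximal stars, together with `a` resp. `c`,
then `b` is between `a` and `c`. -/
lemma btw_of_two_stars {H K : Set P} (hH : T.IsMaxStar H) (hK : T.IsMaxStar K)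
    (hne : H ≠ K) {a b c : P} (ha : a ∈ H) (hb1 : b ∈ H) (hb2 : b ∈ K) (hc : c ∈ K)
    (hab : a ≠ b) (hbc : b ≠ c) (hac : a ≠ c) : T.btw a b c := by
  by_contra hn
  have hadj : T.Adjacent a c :=
    adj_triple (hH.1 a ha b hb1 hab) (hK.1 b hb2 c hc hbc) hac hn
  have hstar : T.IsStar {a, b, c} := by
    intro x hx y hy hxy
    rcases hx with rfl | rfl | hx <;> rcases hy with rfl | rfl | hy
    · exact absurd rfl hxy
    · exact hH.1 x ha y hb1 hxy
    · rw [Set.mem_singleton_iff] at hy; subst hy; exact hadj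
    · exact (hH.1 y ha x hb1 (Ne.symm hxy)).symm'
    · exact absurd rfl hxy
    · rw [Set.mem_singleton_iff] at hy; subst hy; exact hK.1 x hb2 y hc hxy
    · rw [Set.mem_singleton_iff] at hx; subst hx; exact hadj.symm'
    · rw [Set.mem_singleton_iff] at hx; subst hx
      exact (hK.1 y hb2 x hc (Ne.symm hxy)).symm'
    · rw [Set.mem_singleton_iff] at hx hy; subst hx; subst hy; exact absurd rfl hxy
  obtain ⟨M, hM, hsub⟩ := T.exists_maxstar hstar
  have e1 : H = M := maxstar_eq_of_two hH hM ha (hsub (by simp)) hb1 (hsub (by simp)) hab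
  have e2 : K = M := maxstar_eq_of_two hK hM hb2 (hsub (by simp)) hc (hsub (by simp)) hbc
  exact hne (e1.trans e2.symm)

lemma no_cycle_aux (x₁ : P) :
    ∀ (n : ℕ) (w u : P) (H : {H : Set P // T.IsMaxStar H})
      (p : (starGraph T).Walk (Sum.inl u) (Sum.inl x₁)),
      p.length ≤ n → p.support.Nodup → Sum.inr H ∉ p.support →
      w ∈ H.1 → u ∈ H.1 → w ≠ u → u ≠ x₁ →
      (w = x₁ ∨ (T.btw x₁ w u ∧ Sum.inl w ∉ p.support)) → False := by
  intro n
  induction n with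
  | zero =>
    intro w u H p hlen hnd hHp hw hu hwu hux hinv
    cases p with
    | nil => exact hux rfl
    | cons h q => simp at hlen
  | succ n ih =>
    intro w u H p hlen hnd hHp hw hu hwu hux hinv
    cases p with
    | nil => exact hux rfl
    | cons h q =>
      obtain ⟨H', rfl, huH'⟩ := adj_inl h
      cases q with
      | cons h₂ r =>
        obtain ⟨u', rfl, hu'H'⟩ := adj_inr h₂
        -- support structure
        have hsup : (SimpleGraph.Walk.cons h (SimpleGraph.Walk.cons h₂ r)).support
            = Sum.inl u :: Sum.inr H' :: r.support := by
          simp [SimpleGraph.Walk.support_cons]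
        rw [hsup] at hnd hHp
        have hHH' : H ≠ H' := by
          intro e; exact hHp (by simp [e])
        have hndr : r.support.Nodup := by
          simp only [List.nodup_cons] at hnd; exact hnd.2.2
        have hH'r : Sum.inr H' ∉ r.support := by
          simp only [List.nodup_cons] at hnd; exact hnd.2.1
        have hur : Sum.inl u ∉ r.support := by
          simp only [List.nodup_cons, List.mem_cons] at hnd
          exact fun hm => hnd.1 (Or.inr hm)
        have huu' : u ≠ u' := by
          intro e
          exact hur (e ▸ r.start_mem_support)
        have hbtw : T.btw x₁ u u' ∨ u' = x₁ := by
          rcases eq_or_ne u' x₁ with rfl | hu'x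
          · exact Or.inr rfl
          refine Or.inl ?_
          rcases hinv with rfl | ⟨hbtw, hwp⟩
          · exact btw_of_two_stars H.2 H'.2 (fun e => hHH' (Subtype.ext e))
              hw hu huH' hu'H' (Ne.symm hux) huu' (Ne.symm hu'x)
          · have hwu' : w ≠ u' := by
              intro e
              exact hwp (by rw [hsup, e]; simp [r.start_mem_support])
            have h2 : T.btw w u u' := btw_of_two_stars H.2 H'.2
              (fun e => hHH' (Subtype.ext e)) hw hu huH' hu'H' hwu huu' hwu'
            exact btw_chain hbtw h2
        rcases hbtw with hbtw | rfl
        · -- recurse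
          have hlenr : r.length ≤ n := by
            simp only [SimpleGraph.Walk.length_cons] at hlen; omega
          exact ih u u' H' r hlenr hndr hH'r huH' hu'H' huu' (btw_ne13 hbtw).symm
            (Or.inr ⟨hbtw, hur⟩)
        · -- arrived back at the basepoint (now called u') : contradiction
          rcases hinv with rfl | ⟨hbtw, hwp⟩
          · -- H and H' share u and the basepoint
            have : H.1 = H'.1 := maxstar_eq_of_two H.2 H'.2 hu huH' hw hu'H' hux
            exact hHH' (Subtype.ext this)
          · have hwx : w ≠ u' := Ne.symm (btw_ne12 hbtw)
            have h2 : T.btw w u u' := btw_of_two_stars H.2 H'.2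
              (fun e => hHH' (Subtype.ext e)) hw hu huH' hu'H' hwu hux hwx
            exact T.ax1 u' u (btw_chain hbtw h2)

lemma no_cycle_inl (x₁ : P) (c : (starGraph T).Walk (Sum.inl x₁) (Sum.inl x₁))
    (hc : c.IsCycle) : False := by
  cases c with
  | nil => exact SimpleGraph.Walk.IsCycle.not_of_nil hc
  | cons h q =>
    obtain ⟨H₁, rfl, hx₁H⟩ := adj_inl h
    cases q with
    | cons h₂ r =>
      obtain ⟨x₂, rfl, hx₂H⟩ := adj_inr h₂
      have hsupt : (SimpleGraph.Walk.cons h (SimpleGraph.Walk.cons h₂ r)).support.tail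
          = Sum.inr H₁ :: r.support := by
        simp [SimpleGraph.Walk.support_cons]
      have hnd := hc.support_nodup
      rw [hsupt] at hnd
      simp only [List.nodup_cons] at hnd
      rcases eq_or_ne x₂ x₁ with rfl | hne
      · cases r with
        | nil =>
          have h3 := hc.three_le_length
          simp at h3
        | cons h₃ r' =>
          have hnd2 := hnd.2
          rw [SimpleGraph.Walk.support_cons] at hnd2
          simp only [List.nodup_cons] at hnd2
          exact hnd2.1 r'.end_mem_support
      · exact no_cycle_aux x₁ r.length x₁ x₂ H₁ r le_rfl hnd.2 hnd.1
          hx₁H hx₂H (Ne.symm hne) hne (Or.inl rfl)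

end Pretree

namespace Pretree
variable {P : Type*} {T : Pretree P}

lemma reach_inr [Nonempty P] (hdisc : T.Discrete) (x : P)
    (H : {H : Set P // T.IsMaxStar H}) :
    (starGraph T).Reachable (Sum.inl x) (Sum.inr H) := by
  obtain ⟨v, hv⟩ := maxstar_nonempty H
  exact (reach_pts hdisc x v).trans (starGraph_adj hv).reachable

end Pretree

open Pretree in
/-- For a countable discrete pretree, the graph on the points and maximal stars is a tree. -/
theorem starGraph_isTree {P : Type*} [Countable P] [Nonempty P] (T : Pretree P)
    (hdisc : T.Discrete) : (starGraph T).IsTree := by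
  constructor
  · -- connected
    constructor
    · intro a b
      cases a with
      | inl x =>
        cases b with
        | inl y => exact reach_pts hdisc x y
        | inr H => exact reach_inr hdisc x H
      | inr H =>
        cases b with
        | inl y => exact (reach_inr hdisc y H).symm
        | inr K =>
          obtain ⟨v, hv⟩ := maxstar_nonempty H
          exact (reach_inr hdisc v H).symm.trans (reach_inr hdisc v K)
  · intro v c hc
    classical
    cases v with
    | inl x => exact no_cycle_inl x c hc
    | inr H =>
      cases c with
      | nil => exact SimpleGraph.Walk.IsCycle.not_of_nil hc
      | cons h q =>
        obtain ⟨x, heq, hx⟩ := adj_inr h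
        have hmem : Sum.inl x ∈ (SimpleGraph.Walk.cons h q).support := by
          rw [SimpleGraph.Walk.support_cons]
          exact List.mem_cons_of_mem _ (heq ▸ q.start_mem_support)
        exact no_cycle_inl x _ (hc.rotate hmem)
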